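/- arXiv:1808.01418 — 3 statements merged into one kernel-verified Lean document; each statement's English description precedes it below -/
import Mathlib

section
/- (Theorem 2, consensus criterion) Let L be an N×N real symmetric positive semidefinite matrix whose kernel is spanned by the all-ones vector 1⃗, with eigenvalues 0 = λ₁ < λ₂ ≤ … ≤ λ_N. Let ε(k) be an M-periodic real gain sequence (ε(k+M) = ε(k) for all k) and set h(λ, M) = ∏_{k=0}^{M−1}(1 − ε(k)λ) and ρ* = max_{2 ≤ i ≤ N} |h(λᵢ, M)|. Then the products ∏_{k=0}^{T−1}(I − ε(k)L) converge to (1/N)·1⃗1⃗ᵀ as T → ∞ (asymptotic average consensus from every initial state) if and only if ρ* < 1. -/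
open Matrix Finset Filter

/-- Product of a periodic sequence over `q*M + r` initial terms. -/
lemma aux_prod_mul_period (f : ℕ → ℝ) (M : ℕ) (hper : ∀ k, f (k + M) = f k) (q r : ℕ) :
    ∏ k ∈ Finset.range (q * M + r), f k =
      (∏ k ∈ Finset.range M, f k) ^ q * ∏ k ∈ Finset.range r, f k := by
  induction q with
  | zero => simp
  | succ q ih =>
    have hkey : ∀ T, ∏ k ∈ Finset.range (T + M), f k
        = (∏ k ∈ Finset.range M, f k) * ∏ k ∈ Finset.range T, f k := by
      intro T
      rw [add_comm T M, Finset.prod_range_add]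
      congr 1
      exact Finset.prod_congr rfl fun k _ => by rw [add_comm M k, hper k]
    have h1 : (q + 1) * M + r = (q * M + r) + M := by ring
    rw [h1, hkey, ih, pow_succ]; ring

lemma aux_tendsto_div_atTop {M : ℕ} (hM : 0 < M) :
    Tendsto (fun T : ℕ => T / M) atTop atTop := by
  refine tendsto_atTop_atTop.mpr fun b => ⟨b * M, fun T hT => ?_⟩
  exact (Nat.le_div_iff_mul_le hM).mpr hT

lemma aux_scalar_tendsto_zero (f : ℕ → ℝ) (M : ℕ) (hM : 0 < M)
    (hper : ∀ k, f (k + M) = f k)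
    (h : |∏ k ∈ Finset.range M, f k| < 1) :
    Tendsto (fun T => ∏ k ∈ Finset.range T, f k) atTop (nhds 0) := by
  set h0 := ∏ k ∈ Finset.range M, f k with hh0
  set C := ∑ r ∈ Finset.range M, |∏ k ∈ Finset.range r, f k| with hC
  have hCle : ∀ r < M, |∏ k ∈ Finset.range r, f k| ≤ C := fun r hr =>
    Finset.single_le_sum (f := fun r => |∏ k ∈ Finset.range r, f k|)
      (fun i _ => abs_nonneg _) (Finset.mem_range.mpr hr)
  have hbound : ∀ T, |∏ k ∈ Finset.range T, f k| ≤ |h0| ^ (T / M) * C := by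
    intro T
    conv_lhs => rw [← Nat.div_add_mod' T M, aux_prod_mul_period f M hper]
    rw [abs_mul, abs_pow]
    exact mul_le_mul_of_nonneg_left (hCle _ (Nat.mod_lt _ hM))
      (pow_nonneg (abs_nonneg _) _)
  have hpow : Tendsto (fun T : ℕ => |h0| ^ (T / M) * C) atTop (nhds 0) := by
    have := ((tendsto_pow_atTop_nhds_zero_of_lt_one (abs_nonneg h0) h).comp
      (aux_tendsto_div_atTop hM)).mul_const C
    simpa using this
  rw [tendsto_zero_iff_abs_tendsto_zero]
  exact squeeze_zero (fun T => abs_nonneg _) hbound hpow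

lemma aux_scalar_converse (f : ℕ → ℝ) (M : ℕ) (hM : 0 < M)
    (hper : ∀ k, f (k + M) = f k)
    (h : Tendsto (fun T => ∏ k ∈ Finset.range T, f k) atTop (nhds 0)) :
    |∏ k ∈ Finset.range M, f k| < 1 := by
  by_contra hge
  push_neg at hge
  have hsub : Tendsto (fun q : ℕ => ∏ k ∈ Finset.range (q * M), f k) atTop (nhds 0) :=
    h.comp (tendsto_atTop_atTop.mpr fun b =>
      ⟨b, fun q hq => le_trans hq (Nat.le_mul_of_pos_right q hM)⟩)
  have heq : ∀ q : ℕ, ∏ k ∈ Finset.range (q * M), f k = (∏ k ∈ Finset.range M, f k) ^ q := by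
    intro q
    have := aux_prod_mul_period f M hper q 0
    simpa using this
  have hpow : Tendsto (fun q : ℕ => |∏ k ∈ Finset.range M, f k| ^ q) atTop (nhds 0) := by
    have := (tendsto_zero_iff_abs_tendsto_zero _).mp hsub
    simp only [Function.comp_def, heq, abs_pow] at this
    exact this
  have := hpow.eventually (gt_mem_nhds one_pos)
  rcases this.exists with ⟨q, hq⟩
  exact absurd hq (not_lt.mpr (by exact one_le_pow₀ hge))

lemma aux_mul_vecMulVec {N : ℕ} (A : Matrix (Fin N) (Fin N) ℝ) (a b : Fin N → ℝ) :
    A * vecMulVec a b = vecMulVec (A.mulVec a) b := by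
  ext x y
  simp [Matrix.mul_apply, vecMulVec_apply, mulVec, dotProduct, Finset.sum_mul, mul_assoc]

lemma aux_smul_vecMulVec {N : ℕ} (c : ℝ) (a b : Fin N → ℝ) :
    vecMulVec (c • a) b = c • vecMulVec a b := by
  ext x y; simp [vecMulVec_apply, mul_assoc]

lemma aux_vecMulVec_mulVec {N : ℕ} (a b c : Fin N → ℝ) :
    (vecMulVec a b).mulVec c = (b ⬝ᵥ c) • a := by
  ext x
  simp only [vecMulVec_apply, mulVec, dotProduct, Pi.smul_apply, smul_eq_mul]
  rw [Finset.sum_mul]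
  exact Finset.sum_congr rfl fun y _ => by ring

lemma aux_sum_proj {N : ℕ} (v : Fin N → Fin N → ℝ)
    (horth : ∀ i j, v i ⬝ᵥ v j = if i = j then 1 else 0) :
    ∑ i, vecMulVec (v i) (v i) = 1 := by
  classical
  set Q : Matrix (Fin N) (Fin N) ℝ := Matrix.of fun x i => v i x with hQ
  have h1 : Qᵀ * Q = 1 := by
    ext i j
    have := horth i j
    simpa [Matrix.mul_apply, hQ, dotProduct, Matrix.one_apply] using this
  have h2 : Q * Qᵀ = 1 := mul_eq_one_comm.mp h1
  calc ∑ i, vecMulVec (v i) (v i) = Q * Qᵀ := by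
        ext x y
        simp only [Matrix.sum_apply, vecMulVec_apply, Matrix.mul_apply, hQ,
          Matrix.transpose_apply, Matrix.of_apply]
      _ = 1 := h2

lemma aux_phi_continuous {N : ℕ} (w : Fin N → ℝ) :
    Continuous fun A : Matrix (Fin N) (Fin N) ℝ => w ⬝ᵥ A.mulVec w := by
  have : (fun A : Matrix (Fin N) (Fin N) ℝ => w ⬝ᵥ A.mulVec w)
      = fun A => ∑ x, ∑ y, w x * (A x y * w y) := by
    funext A; simp [dotProduct, mulVec, Finset.mul_sum]
  rw [this]
  refine continuous_finset_sum _ fun x _ => continuous_finset_sum _ fun y _ => ?_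
  have hA : Continuous fun A : Matrix (Fin N) (Fin N) ℝ => A x y :=
    (continuous_apply y).comp (continuous_apply (A := fun _ : Fin N => Fin N → ℝ) x)
  exact continuous_const.mul (hA.mul continuous_const)

lemma aux_sum_mulVec {ι : Type*} {N : ℕ} (s : Finset ι)
    (A : ι → Matrix (Fin N) (Fin N) ℝ) (w : Fin N → ℝ) :
    (∑ j ∈ s, A j).mulVec w = ∑ j ∈ s, (A j).mulVec w := by
  ext x
  simp only [mulVec, dotProduct, Matrix.sum_apply, Finset.sum_apply, Finset.sum_mul]
  exact Finset.sum_comm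

lemma aux_dot_sum {ι : Type*} {N : ℕ} (s : Finset ι) (a : Fin N → ℝ) (w : ι → Fin N → ℝ) :
    a ⬝ᵥ ∑ j ∈ s, w j = ∑ j ∈ s, a ⬝ᵥ w j := by
  simp only [dotProduct, Finset.sum_apply, Finset.mul_sum]
  exact Finset.sum_comm

/-- The product `∏_{k=0}^{T-1} (I - ε(k) L)`, built recursively as
`P 0 = I`, `P (T+1) = (I - ε(T) L) * P T`. -/
noncomputable def consProd {N : ℕ} (L : Matrix (Fin N) (Fin N) ℝ) (ε : ℕ → ℝ) :
    ℕ → Matrix (Fin N) (Fin N) ℝ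
  | 0 => 1
  | T + 1 => (1 - ε T • L) * consProd L ε T

theorem stmt_6 (N : ℕ) (hN : 2 ≤ N)
    (L : Matrix (Fin N) (Fin N) ℝ) (hsymm : L.IsSymm) (hpsd : L.PosSemidef)
    (lam : Fin N → ℝ) (v : Fin N → Fin N → ℝ)
    (hlam_mono : Monotone lam)
    (hlam0 : ∀ i : Fin N, (i : ℕ) = 0 → lam i = 0)
    (hlam_pos : ∀ i : Fin N, (i : ℕ) ≠ 0 → 0 < lam i)
    (heig : ∀ i, L.mulVec (v i) = lam i • v i)
    (horth : ∀ i j, v i ⬝ᵥ v j = if i = j then 1 else 0)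
    (hv0 : ∀ i : Fin N, (i : ℕ) = 0 → v i = fun _ => (Real.sqrt N)⁻¹)
    (hne : (Finset.univ.filter (fun i : Fin N => (i : ℕ) ≠ 0)).Nonempty)
    (M : ℕ) (hM : 0 < M) (ε : ℕ → ℝ) (hper : ∀ k, ε (k + M) = ε k) :
    Tendsto (consProd L ε) atTop
        (nhds ((N : ℝ)⁻¹ • vecMulVec (fun _ => 1) (fun _ => 1))) ↔
      (Finset.univ.filter (fun i : Fin N => (i : ℕ) ≠ 0)).sup' hne
          (fun i => |∏ k ∈ Finset.range M, (1 - ε k * lam i)|) < 1 := by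
  classical
  set P : Fin N → Matrix (Fin N) (Fin N) ℝ := fun i => vecMulVec (v i) (v i) with hP
  set c : Fin N → ℕ → ℝ := fun i T => ∏ k ∈ Finset.range T, (1 - ε k * lam i) with hc
  -- spectral decomposition of the product
  have hdecomp : ∀ T, consProd L ε T = ∑ i, c i T • P i := by
    intro T
    induction T with
    | zero =>
      simp only [consProd, hc, Finset.range_zero, Finset.prod_empty, one_smul]
      exact (aux_sum_proj v horth).symm
    | succ T ih =>
      have hstep : ∀ i, (1 - ε T • L) * P i = (1 - ε T * lam i) • P i := by
        intro i
        have hLP : L * P i = lam i • P i := by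
          rw [hP]
          simp only
          rw [aux_mul_vecMulVec, heig i, aux_smul_vecMulVec]
        rw [sub_mul, one_mul, Matrix.smul_mul, hLP, smul_smul, sub_smul, one_smul]
      calc consProd L ε (T + 1) = (1 - ε T • L) * consProd L ε T := rfl
        _ = ∑ i, (1 - ε T • L) * (c i T • P i) := by rw [ih, Finset.mul_sum]
        _ = ∑ i, c i (T + 1) • P i := by
            refine Finset.sum_congr rfl fun i _ => ?_
            rw [Matrix.mul_smul, hstep i, smul_smul]
            congr 1
            rw [hc]
            simp only
            rw [Finset.prod_range_succ]
  -- the coefficient extraction functional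
  have hphi : ∀ i T, v i ⬝ᵥ (consProd L ε T).mulVec (v i) = c i T := by
    intro i T
    rw [hdecomp T, aux_sum_mulVec, aux_dot_sum]
    rw [Finset.sum_eq_single i]
    · rw [Matrix.smul_mulVec, hP]
      simp only
      rw [aux_vecMulVec_mulVec, horth i i, if_pos rfl, one_smul]
      simp [dotProduct_smul, horth i i]
    · intro j _ hj
      rw [Matrix.smul_mulVec, hP]
      simp only
      rw [aux_vecMulVec_mulVec, horth j i, if_neg hj, zero_smul, smul_zero,
        dotProduct_zero]
    · intro h; exact absurd (Finset.mem_univ i) h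
  -- the zero eigenvector index
  have hN0 : 0 < N := by omega
  set i0 : Fin N := ⟨0, hN0⟩ with hi0
  have hPinf : ((N : ℝ)⁻¹ • vecMulVec (fun _ => (1:ℝ)) (fun _ => 1)
      : Matrix (Fin N) (Fin N) ℝ) = P i0 := by
    rw [hP]
    simp only
    rw [hv0 i0 rfl]
    ext x y
    simp only [Matrix.smul_apply, vecMulVec_apply, smul_eq_mul, mul_one]
    rw [← mul_inv]
    congr 1
    exact (Real.mul_self_sqrt (by positivity)).symm
  have hci0 : ∀ T, c i0 T = 1 := by
    intro T
    rw [hc]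
    simp [hlam0 i0 rfl]
  constructor
  · -- convergence implies contraction
    intro H
    rw [Finset.sup'_lt_iff]
    intro i hi
    have hi' : (i : ℕ) ≠ 0 := (Finset.mem_filter.mp hi).2
    have hcomp : Tendsto (fun T => v i ⬝ᵥ (consProd L ε T).mulVec (v i)) atTop
        (nhds (v i ⬝ᵥ (((N : ℝ)⁻¹ • vecMulVec (fun _ => (1:ℝ)) (fun _ => 1)
          : Matrix (Fin N) (Fin N) ℝ).mulVec (v i)))) :=
      ((aux_phi_continuous (v i)).tendsto _).comp H
    have hlim0 : v i ⬝ᵥ (((N : ℝ)⁻¹ • vecMulVec (fun _ => (1:ℝ)) (fun _ => 1)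
        : Matrix (Fin N) (Fin N) ℝ).mulVec (v i)) = 0 := by
      rw [hPinf, hP]
      simp only
      have hne' : i ≠ i0 := fun h => hi' (by rw [h, hi0])
      rw [aux_vecMulVec_mulVec, horth i0 i, if_neg (Ne.symm hne'), zero_smul,
        dotProduct_zero]
    have hc0 : Tendsto (fun T => c i T) atTop (nhds 0) := by
      rw [← hlim0]
      exact hcomp.congr fun T => hphi i T
    exact aux_scalar_converse _ M hM (fun k => by rw [hper k]) hc0
  · -- contraction implies convergence
    intro hρ
    have hlim : Tendsto (fun T => ∑ i, c i T • P i) atTop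
        (nhds (∑ i : Fin N, (if (i : ℕ) = 0 then (1:ℝ) else 0) • P i)) := by
      refine tendsto_finset_sum _ fun i _ => ?_
      by_cases h0 : (i : ℕ) = 0
      · rw [if_pos h0]
        have : ∀ T, c i T = 1 := by
          intro T; rw [hc]; simp [hlam0 i h0]
        simp only [this]
        exact tendsto_const_nhds
      · rw [if_neg h0]
        have hlt : |∏ k ∈ Finset.range M, (1 - ε k * lam i)| < 1 :=
          lt_of_le_of_lt
            (Finset.le_sup' (fun i => |∏ k ∈ Finset.range M, (1 - ε k * lam i)|)
              (Finset.mem_filter.mpr ⟨Finset.mem_univ i, h0⟩)) hρ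
        exact (aux_scalar_tendsto_zero _ M hM (fun k => by rw [hper k]) hlt).smul_const (P i)
    have hsum : ∑ i : Fin N, (if (i : ℕ) = 0 then (1:ℝ) else 0) • P i = P i0 := by
      rw [Finset.sum_eq_single i0]
      · rw [if_pos rfl, one_smul]
      · intro j _ hj
        have : (j : ℕ) ≠ 0 := fun h => hj (Fin.ext (by rw [h, hi0]))
        rw [if_neg this, zero_smul]
      · intro h; exact absurd (Finset.mem_univ i0) h
    rw [hsum] at hlim
    rw [hPinf]
    exact hlim.congr fun T => (hdecomp T).symm
end

section
/- (Theorem 3, worst-case bound) Let 0 < α < β, let M ≥ 1, set r_k = α + (β−α)(k+1)/(M+1) for k = 0, …, M−1 and h(λ, M) = ∏_{k=0}^{M−1}(1 − λ/r_k). Then max_{λ ∈ [α, β]} |h(λ, M)| ≤ γ_M := M! / ∏_{k=1}^{M}(k + (M+1)α/(β−α)), and γ_M < 1. Consequently, for any N×N real symmetric positive semidefinite matrix L whose kernel is spanned by the all-ones vector and whose nonzero eigenvalues all lie in [α, β], the M-periodic gain sequence ε(k+jM) = 1/r_k (k = 0, …, M−1, j ≥ 0) drives ∏_{k=0}^{T−1}(I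 − ε(k)L) to (1/N)·1⃗1⃗ᵀ as T → ∞, with per-period convergence rate ρ_M = max_{2 ≤ i ≤ N}|h(λᵢ, M)| ≤ γ_M. -/
open Matrix Finset Filter

section AuxLemmas

lemma aux_prod_desc (m : ℕ) : ∏ k ∈ Finset.range m, (m - k) = m.factorial := by
  induction m with
  | zero => simp
  | succ n ih =>
    rw [Finset.prod_range_succ' (fun k => n + 1 - k) n]
    simp only [Nat.succ_sub_succ]
    rw [ih, Nat.sub_zero, Nat.factorial_succ, mul_comm]

lemma aux_G_prod (M m : ℕ) (hm : m ≤ M) :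
    ∏ k ∈ Finset.range M, (if k < m then m - k else k + 1 - m) =
      m.factorial * (M - m).factorial := by
  have h1 : ∏ k ∈ Finset.range M, (if k < m then m - k else k + 1 - m) =
      (∏ k ∈ Finset.range m, (m - k)) * ∏ k ∈ Finset.range (M - m), (k + 1) := by
    conv_lhs => rw [show M = m + (M - m) by omega, Finset.prod_range_add]
    congr 1
    · exact Finset.prod_congr rfl fun k hk => if_pos (Finset.mem_range.mp hk)
    · exact Finset.prod_congr rfl fun k hk => by rw [if_neg (by omega)]; omega
  rw [h1, aux_prod_desc, Finset.prod_range_add_one_eq_factorial]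

lemma aux_nodes_bound (M : ℕ) (s : ℝ) (hs0 : 0 ≤ s) (hs1 : s ≤ M + 1) :
    ∏ k ∈ Finset.range M, |s - (k + 1)| ≤ (M.factorial : ℝ) := by
  set m : ℕ := min ⌊s⌋₊ M with hmdef
  have hmM : m ≤ M := min_le_right _ _
  have hms : (m : ℝ) ≤ s :=
    le_trans (by exact_mod_cast Nat.cast_le.mpr (min_le_left _ _)) (Nat.floor_le hs0)
  have hsm : s ≤ m + 1 := by
    rcases le_or_gt ⌊s⌋₊ M with h | h
    · have hm : m = ⌊s⌋₊ := min_eq_left h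
      rw [hm]
      exact (Nat.lt_floor_add_one s).le
    · have hm : m = M := min_eq_right h.le
      rw [hm]; exact hs1
  have hstep : ∀ k ∈ Finset.range M, |s - (k + 1)| ≤
      ((if k < m then m - k else k + 1 - m : ℕ) : ℝ) := by
    intro k _
    rcases lt_or_ge k m with hkm | hkm
    · rw [if_pos hkm]
      have hk1m : (k : ℝ) + 1 ≤ m := by exact_mod_cast Nat.succ_le_of_lt hkm
      rw [abs_of_nonneg (by linarith)]
      push_cast [Nat.cast_sub hkm.le]
      linarith
    · rw [if_neg (not_lt.mpr hkm)]
      have hk1m : (m : ℝ) ≤ k := by exact_mod_cast hkm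
      rw [abs_of_nonpos (by linarith)]
      push_cast [Nat.cast_sub (by omega : m ≤ k + 1)]
      linarith
  calc ∏ k ∈ Finset.range M, |s - (k + 1)|
      ≤ ∏ k ∈ Finset.range M, ((if k < m then m - k else k + 1 - m : ℕ) : ℝ) :=
        Finset.prod_le_prod (fun k _ => abs_nonneg _) hstep
    _ = ((m.factorial * (M - m).factorial : ℕ) : ℝ) := by
        rw [← Nat.cast_prod, aux_G_prod M m hmM]
    _ ≤ (M.factorial : ℝ) := by
        exact_mod_cast Nat.le_of_dvd M.factorial_pos
          (Nat.factorial_mul_factorial_dvd_factorial hmM)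

lemma aux_Icc_prod (M : ℕ) (a : ℝ) :
    ∏ k ∈ Finset.Icc 1 M, ((k : ℝ) + a) = ∏ k ∈ Finset.range M, ((k : ℝ) + 1 + a) := by
  rw [← Finset.Ico_add_one_right_eq_Icc, Finset.prod_Ico_eq_prod_range]
  refine Finset.prod_congr (by congr 1) fun k _ => by push_cast; ring

lemma aux_part1 (α β : ℝ) (hα : 0 < α) (hαβ : α < β) (M : ℕ) :
    ∀ x ∈ Set.Icc α β,
      |∏ k ∈ Finset.range M, (1 - x / (α + (β - α) * (k + 1) / (M + 1)))| ≤
        (Nat.factorial M : ℝ) /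
          ∏ k ∈ Finset.Icc 1 M, ((k : ℝ) + (M + 1) * α / (β - α)) := by
  intro x hx
  obtain ⟨hx1, hx2⟩ := hx
  have hβα : (0:ℝ) < β - α := by linarith
  set c : ℝ := (β - α) / (M + 1) with hc
  have hM1 : (0 : ℝ) < M + 1 := by positivity
  have hc0 : 0 < c := div_pos hβα hM1
  set a : ℝ := (M + 1) * α / (β - α) with ha
  have ha0 : 0 < a := div_pos (by positivity) hβα
  have hca : c * a = α := by
    rw [hc, ha]; field_simp
  set s : ℝ := (x - α) / c with hs
  have hs0 : 0 ≤ s := div_nonneg (by linarith) hc0.le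
  have hsM : s ≤ M + 1 := by
    rw [hs, div_le_iff₀ hc0, hc]
    field_simp
    linarith
  have hden : ∀ k : ℕ, (0:ℝ) < (k : ℝ) + 1 + a := fun k => by positivity
  have hfact : ∀ k ∈ Finset.range M, (1 - x / (α + (β - α) * (k + 1) / (M + 1))) =
      ((k + 1 : ℝ) - s) / ((k : ℝ) + 1 + a) := by
    intro k _
    have hr : α + (β - α) * (k + 1) / (M + 1) = c * ((k : ℝ) + 1 + a) := by
      conv_rhs => rw [mul_add, hca]
      rw [hc]; ring
    rw [hr]
    have hxs : x = α + c * s := by rw [hs]; field_simp; ring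
    rw [hxs, ← hca]
    have h1 : c ≠ 0 := hc0.ne'
    have h2 : (k : ℝ) + 1 + a ≠ 0 := (hden k).ne'
    field_simp
    ring
  calc |∏ k ∈ Finset.range M, (1 - x / (α + (β - α) * (k + 1) / (M + 1)))|
      = |∏ k ∈ Finset.range M, (((k : ℝ) + 1 - s) / ((k : ℝ) + 1 + a))| := by
        rw [Finset.prod_congr rfl hfact]
    _ = (∏ k ∈ Finset.range M, |s - ((k : ℝ) + 1)|) /
          ∏ k ∈ Finset.range M, ((k : ℝ) + 1 + a) := by
        rw [Finset.abs_prod, ← Finset.prod_div_distrib]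
        exact Finset.prod_congr rfl fun k _ => by
          rw [abs_div, abs_of_pos (hden k), abs_sub_comm]
    _ ≤ (M.factorial : ℝ) / ∏ k ∈ Finset.range M, ((k : ℝ) + 1 + a) := by
        gcongr
        · exact aux_nodes_bound M s hs0 hsM
    _ = (Nat.factorial M : ℝ) / ∏ k ∈ Finset.Icc 1 M, ((k : ℝ) + a) := by
        rw [aux_Icc_prod]

lemma aux_part2 (α β : ℝ) (hα : 0 < α) (hαβ : α < β) (M : ℕ) (hM : 1 ≤ M) :
    (Nat.factorial M : ℝ) /
      (∏ k ∈ Finset.Icc 1 M, ((k : ℝ) + (M + 1) * α / (β - α))) < 1 := by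
  have ha0 : 0 < (M + 1 : ℝ) * α / (β - α) := div_pos (by positivity) (by linarith)
  have hlt : (Nat.factorial M : ℝ) <
      ∏ k ∈ Finset.Icc 1 M, ((k : ℝ) + (M + 1) * α / (β - α)) := by
    have h1 : (Nat.factorial M : ℝ) = ∏ k ∈ Finset.Icc 1 M, (k : ℝ) := by
      rw [← Nat.cast_prod]
      congr 1
      rw [← Finset.Ico_add_one_right_eq_Icc, Finset.prod_Ico_id_eq_factorial]
    rw [h1]
    refine Finset.prod_lt_prod_of_nonempty (fun k hk => ?_) (fun k hk => by linarith) ?_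
    · simp only [Finset.mem_Icc] at hk
      exact_mod_cast hk.1
    · exact ⟨1, Finset.mem_Icc.mpr ⟨le_refl 1, hM⟩⟩
  exact (div_lt_one (lt_trans (by positivity) hlt)).mpr hlt

lemma aux_mul_vecMulVec_s9 {N : ℕ} (L : Matrix (Fin N) (Fin N) ℝ) (u w : Fin N → ℝ) :
    L * vecMulVec u w = vecMulVec (L.mulVec u) w := by
  ext i j
  simp [Matrix.mul_apply, vecMulVec_apply, Matrix.mulVec, dotProduct, Finset.sum_mul, mul_assoc]

lemma aux_vecMulVec_smul {N : ℕ} (c : ℝ) (u w : Fin N → ℝ) :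
    vecMulVec (c • u) w = c • vecMulVec u w := by
  ext i j
  simp [vecMulVec_apply, mul_assoc]

lemma aux_complete {N : ℕ} (v : Fin N → Fin N → ℝ)
    (horth : ∀ i j, v i ⬝ᵥ v j = if i = j then 1 else 0) :
    ∑ i, vecMulVec (v i) (v i) = (1 : Matrix (Fin N) (Fin N) ℝ) := by
  set A : Matrix (Fin N) (Fin N) ℝ := Matrix.of v with hA
  have h1 : A * Aᵀ = 1 := by
    ext i j
    simp only [Matrix.mul_apply, Matrix.transpose_apply, Matrix.one_apply, hA, Matrix.of_apply]
    exact horth i j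
  have h2 : Aᵀ * A = 1 := mul_eq_one_comm.mp h1
  calc ∑ i, vecMulVec (v i) (v i) = Aᵀ * A := by
        ext a b
        simp [Matrix.mul_apply, Matrix.sum_apply, vecMulVec_apply, hA]
    _ = 1 := h2

end AuxLemmas

lemma aux_consProd_eq {N : ℕ} (L : Matrix (Fin N) (Fin N) ℝ) (ε : ℕ → ℝ)
    (lam : Fin N → ℝ) (v : Fin N → Fin N → ℝ)
    (heig : ∀ i, L.mulVec (v i) = lam i • v i)
    (horth : ∀ i j, v i ⬝ᵥ v j = if i = j then 1 else 0) (T : ℕ) :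
    consProd L ε T =
      ∑ i, (∏ k ∈ Finset.range T, (1 - ε k * lam i)) • vecMulVec (v i) (v i) := by
  induction T with
  | zero => simp [consProd, aux_complete v horth]
  | succ T ih =>
    rw [show consProd L ε (T + 1) = (1 - ε T • L) * consProd L ε T from rfl, ih,
      Finset.mul_sum]
    refine Finset.sum_congr rfl fun i _ => ?_
    rw [Finset.prod_range_succ, Matrix.mul_smul, sub_mul, one_mul, Matrix.smul_mul,
      aux_mul_vecMulVec_s9, heig i, aux_vecMulVec_smul]
    module

theorem stmt_9 (α β : ℝ) (hα : 0 < α) (hαβ : α < β) (M : ℕ) (hM : 1 ≤ M)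
    (N : ℕ) (hN : 2 ≤ N)
    (L : Matrix (Fin N) (Fin N) ℝ) (hsymm : L.IsSymm) (hpsd : L.PosSemidef)
    (lam : Fin N → ℝ) (v : Fin N → Fin N → ℝ)
    (hlam_mono : Monotone lam)
    (hlam0 : ∀ i : Fin N, (i : ℕ) = 0 → lam i = 0)
    (hlam_pos : ∀ i : Fin N, (i : ℕ) ≠ 0 → 0 < lam i)
    (heig : ∀ i, L.mulVec (v i) = lam i • v i)
    (horth : ∀ i j, v i ⬝ᵥ v j = if i = j then 1 else 0)
    (hv0 : ∀ i : Fin N, (i : ℕ) = 0 → v i = fun _ => (Real.sqrt N)⁻¹)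
    (hne : (Finset.univ.filter (fun i : Fin N => (i : ℕ) ≠ 0)).Nonempty)
    -- all nonzero eigenvalues lie in [α, β]
    (hspec : ∀ i : Fin N, (i : ℕ) ≠ 0 → lam i ∈ Set.Icc α β)
    -- the M-periodic gain sequence ε(k + jM) = 1/r_k with r_k = α + (β-α)(k+1)/(M+1)
    (ε : ℕ → ℝ)
    (hε : ∀ j k, k < M → ε (k + j * M) = (α + (β - α) * (k + 1) / (M + 1))⁻¹) :
    (∀ x ∈ Set.Icc α β,
        |∏ k ∈ Finset.range M, (1 - x / (α + (β - α) * (k + 1) / (M + 1)))| ≤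
          (Nat.factorial M : ℝ) /
            ∏ k ∈ Finset.Icc 1 M, ((k : ℝ) + (M + 1) * α / (β - α))) ∧
    (Nat.factorial M : ℝ) / (∏ k ∈ Finset.Icc 1 M, ((k : ℝ) + (M + 1) * α / (β - α))) < 1 ∧
    Tendsto (consProd L ε) atTop
      (nhds ((N : ℝ)⁻¹ • vecMulVec (fun _ => 1) (fun _ => 1))) ∧
    (Finset.univ.filter (fun i : Fin N => (i : ℕ) ≠ 0)).sup' hne
        (fun i => |∏ k ∈ Finset.range M, (1 - ε k * lam i)|) ≤
      (Nat.factorial M : ℝ) / ∏ k ∈ Finset.Icc 1 M, ((k : ℝ) + (M + 1) * α / (β - α)) := by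
  have hM0 : 0 < M := hM
  have hβα : (0:ℝ) < β - α := by linarith
  set γ : ℝ := (Nat.factorial M : ℝ) /
      ∏ k ∈ Finset.Icc 1 M, ((k : ℝ) + (M + 1) * α / (β - α)) with hγdef
  have ha0 : 0 < (M + 1 : ℝ) * α / (β - α) := div_pos (by positivity) hβα
  have hprodpos : 0 < ∏ k ∈ Finset.Icc 1 M, ((k : ℝ) + (M + 1) * α / (β - α)) :=
    Finset.prod_pos fun k hk => by
      have : 1 ≤ k := (Finset.mem_Icc.mp hk).1
      have : (1:ℝ) ≤ k := by exact_mod_cast this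
      linarith
  have hγ0 : 0 ≤ γ := div_nonneg (Nat.cast_nonneg _) hprodpos.le
  have hγ1 : γ < 1 := aux_part2 α β hα hαβ M hM
  have hpart1 := aux_part1 α β hα hαβ M
  -- ε n = (r (n % M))⁻¹
  have hεval : ∀ n, ε n = (α + (β - α) * ((n % M : ℕ) + 1) / (M + 1))⁻¹ := by
    intro n
    have h := hε (n / M) (n % M) (Nat.mod_lt n hM0)
    rwa [Nat.mod_add_div'] at h
  have hε0 : ∀ k, k < M → ε k = (α + (β - α) * (k + 1) / (M + 1))⁻¹ := by
    intro k hk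
    have h := hε 0 k hk
    simpa using h
  -- each factor is bounded
  have hr_pos : ∀ j : ℕ, j < M → α < α + (β - α) * ((j : ℝ) + 1) / (M + 1) ∧
      α + (β - α) * ((j : ℝ) + 1) / (M + 1) < β := by
    intro j hj
    constructor
    · have : 0 < (β - α) * ((j : ℝ) + 1) / (M + 1) := by positivity
      linarith
    · have hjM : (j : ℝ) + 1 < (M : ℝ) + 1 := by
        have : (j : ℝ) < M := by exact_mod_cast hj
        linarith
      have hM1 : (0:ℝ) < (M:ℝ) + 1 := by positivity
      have : (β - α) * ((j : ℝ) + 1) / (M + 1) < (β - α) * 1 := by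
        rw [div_lt_iff₀ hM1]
        have := mul_lt_mul_of_pos_left hjM hβα
        linarith
      linarith
  -- the per-index product bound
  have hp : ∀ i : Fin N, (i : ℕ) ≠ 0 →
      |∏ k ∈ Finset.range M, (1 - ε k * lam i)| ≤ γ := by
    intro i hi
    have heq : ∏ k ∈ Finset.range M, (1 - ε k * lam i) =
        ∏ k ∈ Finset.range M, (1 - lam i / (α + (β - α) * (k + 1) / (M + 1))) := by
      refine Finset.prod_congr rfl fun k hk => ?_
      rw [hε0 k (Finset.mem_range.mp hk), inv_mul_eq_div]
    rw [heq]
    exact hpart1 (lam i) (hspec i hi)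
  refine ⟨hpart1, hγ1, ?_, Finset.sup'_le hne _ fun i hi =>
    hp i (by simpa using (Finset.mem_filter.mp hi).2)⟩
  -- convergence
  have hNpos : (0:ℝ) < N := by exact_mod_cast lt_of_lt_of_le (by norm_num) hN
  set B : ℝ := β / α with hB
  have hB1 : 1 ≤ B := (one_le_div hα).mpr hαβ.le
  -- per-index coefficient tends to 0 for nonzero eigenvalues
  have hcoef : ∀ i : Fin N, (i : ℕ) ≠ 0 →
      Tendsto (fun T => ∏ k ∈ Finset.range T, (1 - ε k * lam i)) atTop (nhds 0) := by
    intro i hi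
    obtain ⟨hl1, hl2⟩ := hspec i hi
    set f : ℕ → ℝ := fun n => 1 - ε n * lam i with hf
    have hfbd : ∀ n, |f n| ≤ B := by
      intro n
      have hj := hr_pos (n % M) (Nat.mod_lt n hM0)
      set r : ℝ := α + (β - α) * ((n % M : ℕ) + 1) / (M + 1) with hrdef
      have hr0 : 0 < r := lt_trans hα hj.1
      have hεn : ε n * lam i = lam i / r := by rw [hεval n, inv_mul_eq_div]
      have h1 : lam i / r ≤ B := by
        rw [hB, div_le_div_iff₀ hr0 hα]
        nlinarith [hj.1, hj.2]
      have h2 : 0 < lam i / r := div_pos (lt_of_lt_of_le hα hl1) hr0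
      rw [hf]
      simp only [hεn]
      rw [abs_le]
      constructor <;> nlinarith
    have hfper : ∀ q k, k < M → f (M * q + k) = f k := by
      intro q k hk
      have h1 : (M * q + k) % M = k := by
        rw [Nat.mul_add_mod, Nat.mod_eq_of_lt hk]
      simp only [hf]
      rw [hεval (M * q + k), hεval k, h1, Nat.mod_eq_of_lt hk]
    have hFq : ∀ q, ∏ k ∈ Finset.range (M * q), f k =
        (∏ k ∈ Finset.range M, f k) ^ q := by
      intro q
      induction q with
      | zero => simp
      | succ q ih =>
        rw [Nat.mul_succ, Finset.prod_range_add, ih, pow_succ]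
        congr 1
        exact Finset.prod_congr rfl fun k hk => hfper q k (Finset.mem_range.mp hk)
    have hbound : ∀ T, |∏ k ∈ Finset.range T, f k| ≤ B ^ M * γ ^ (T / M) := by
      intro T
      have hT : M * (T / M) + T % M = T := Nat.div_add_mod T M
      conv_lhs => rw [← hT, Finset.prod_range_add, abs_mul, hFq, abs_pow]
      have h1 : |∏ k ∈ Finset.range M, f k| ^ (T / M) ≤ γ ^ (T / M) :=
        pow_le_pow_left₀ (abs_nonneg _) (hp i hi) _
      have h2 : |∏ k ∈ Finset.range (T % M), f (M * (T / M) + k)| ≤ B ^ M := by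
        rw [Finset.abs_prod]
        calc ∏ k ∈ Finset.range (T % M), |f (M * (T / M) + k)|
            ≤ ∏ k ∈ Finset.range (T % M), B :=
              Finset.prod_le_prod (fun k _ => abs_nonneg _) (fun k _ => hfbd _)
          _ = B ^ (T % M) := by rw [Finset.prod_const, Finset.card_range]
          _ ≤ B ^ M := pow_le_pow_right₀ hB1 (Nat.mod_lt T hM0).le
      calc |∏ k ∈ Finset.range M, f k| ^ (T / M) *
            |∏ k ∈ Finset.range (T % M), f (M * (T / M) + k)|
          ≤ γ ^ (T / M) * B ^ M := by
            apply mul_le_mul h1 h2 (abs_nonneg _) (pow_nonneg hγ0 _)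
        _ = B ^ M * γ ^ (T / M) := mul_comm _ _
    have hdiv : Tendsto (fun T : ℕ => T / M) atTop atTop := by
      refine tendsto_atTop_atTop.mpr fun b => ⟨b * M, fun T hT => ?_⟩
      exact (Nat.le_div_iff_mul_le hM0).mpr hT
    have hγt : Tendsto (fun T : ℕ => B ^ M * γ ^ (T / M)) atTop (nhds 0) := by
      have h := ((tendsto_pow_atTop_nhds_zero_of_lt_one hγ0 hγ1).comp hdiv).const_mul
        (B ^ M)
      simpa using h
    exact squeeze_zero_norm (fun T => by rw [Real.norm_eq_abs]; exact hbound T) hγt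
  -- assemble matrix convergence
  have hrep := aux_consProd_eq L ε lam v heig horth
  have hi0 : (0 : ℕ) < N := by omega
  set i₀ : Fin N := ⟨0, hi0⟩ with hi₀
  have hlim : ∀ i : Fin N, Tendsto
      (fun T => (∏ k ∈ Finset.range T, (1 - ε k * lam i)) • vecMulVec (v i) (v i)) atTop
      (nhds (if (i : ℕ) = 0 then vecMulVec (v i) (v i) else 0)) := by
    intro i
    by_cases hi : (i : ℕ) = 0
    · rw [if_pos hi]
      have hl : lam i = 0 := hlam0 i hi
      have : ∀ T, (∏ k ∈ Finset.range T, (1 - ε k * lam i)) • vecMulVec (v i) (v i) =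
          vecMulVec (v i) (v i) := by
        intro T
        rw [hl]
        simp
      simp only [this]
      exact tendsto_const_nhds
    · rw [if_neg hi]
      have h := (hcoef i hi).smul_const (vecMulVec (v i) (v i))
      simpa using h
  have hsum : Tendsto (consProd L ε) atTop
      (nhds (∑ i : Fin N, if (i : ℕ) = 0 then vecMulVec (v i) (v i) else 0)) := by
    have h := tendsto_finset_sum Finset.univ (fun i _ => hlim i)
    simpa only [← hrep] using h
  have hsum_eq : (∑ i : Fin N, if (i : ℕ) = 0 then vecMulVec (v i) (v i) else 0) =
      (N : ℝ)⁻¹ • vecMulVec (fun _ => (1:ℝ)) (fun _ => 1) := by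
    rw [Finset.sum_eq_single i₀]
    · rw [if_pos (by simp [hi₀]), hv0 i₀ (by simp [hi₀])]
      ext a b
      simp only [vecMulVec_apply, Matrix.smul_apply, smul_eq_mul, mul_one]
      rw [← mul_inv, Real.mul_self_sqrt (Nat.cast_nonneg N)]
    · intro j _ hj
      rw [if_neg fun h => hj (Fin.ext (by simp [hi₀, h]))]
    · intro h
      exact absurd (Finset.mem_univ i₀) h
  rw [hsum_eq] at hsum
  exact hsum
end

section
/- (Corollary 2) Let β̄ > 0 and M ≥ 1 and define h(λ, M) = ∏_{k=0}^{M−1}(1 − (M+1)λ/(β̄(k+1))). Then: (a) for every i ∈ {0, …, M} and every λ in [β̄ i/(M+1), β̄(i+1)/(M+1)] with λ ≠ 0 and λ ≠ β̄, one has |h(λ, M)| ≤ i!(M−i)!/M!; hence |h(λ, M)| < 1 for all λ ∈ (0, β̄); and (b) for every λ ∈ [β̄/(M+1), Mβ̄/(M+1)], |h(λ, M)| ≤ 1/M. Consequently, for any N×N real symmetric positive semidefinite matrix L whose kernel is spanned by the all-ones vector and whose nonzero eigenvalues lie in (0, β̄), the M-periodic gains ε(k+jM) = (M+1)/(β̄(k+1))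 yield asymptotic average consensus, and if all nonzero eigenvalues lie in [β̄/(M+1), Mβ̄/(M+1)] then the per-period convergence rate satisfies ρ_M ≤ 1/M. -/
open Matrix Finset Filter

/-- `M ≤ C(M, i)` for `1 ≤ i < M`. -/
lemma aux_choose : ∀ (M i : ℕ), 1 ≤ i → i < M → M ≤ M.choose i := by
  intro M
  induction M with
  | zero => omega
  | succ n ih =>
    intro i h1 h2
    obtain ⟨k, rfl⟩ : ∃ k, i = k + 1 := ⟨i - 1, by omega⟩
    rw [Nat.choose_succ_succ]
    simp only [Nat.succ_eq_add_one]
    by_cases hk : k = 0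
    · subst hk
      simp only [Nat.zero_add, Nat.choose_zero_right, Nat.choose_one_right]
      omega
    · rcases (by omega : k + 1 < n ∨ k + 1 = n) with h | h
      · have := ih (k + 1) (by omega) h
        have hpos := Nat.choose_pos (show k ≤ n by omega)
        omega
      · subst h
        rw [Nat.choose_succ_self_right, Nat.choose_self]

lemma aux_prod_sub (n : ℕ) : ∏ k ∈ Finset.range n, (n - k) = n.factorial := by
  rw [← Finset.prod_range_add_one_eq_factorial, ← Finset.prod_range_reflect (fun j => j + 1) n]
  refine Finset.prod_congr rfl fun j hj => ?_
  have := Finset.mem_range.mp hj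
  omega

lemma aux_prod_add_one (n : ℕ) : ∏ k ∈ Finset.range n, ((k : ℝ) + 1) = n.factorial := by
  rw [← Finset.prod_range_add_one_eq_factorial, Nat.cast_prod]
  push_cast
  rfl

lemma aux_prod_sub_real (n : ℕ) : ∏ k ∈ Finset.range n, ((n : ℝ) - k) = n.factorial := by
  rw [← aux_prod_sub n, Nat.cast_prod]
  refine Finset.prod_congr rfl fun k hk => ?_
  have hk' := Finset.mem_range.mp hk
  rw [Nat.cast_sub hk'.le]

/-- Key bound: for `i ≤ t ≤ i+1`, `|∏_{k<M} (1 - t/(k+1))| ≤ i!(M-i)!/M!`. -/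
lemma habs (M i : ℕ) (hiM : i ≤ M) (t : ℝ) (ht1 : (i : ℝ) ≤ t) (ht2 : t ≤ (i : ℝ) + 1) :
    |∏ k ∈ Finset.range M, (1 - t / ((k : ℝ) + 1))| ≤
      ((Nat.factorial i : ℝ) * (Nat.factorial (M - i) : ℝ)) / (Nat.factorial M : ℝ) := by
  have hMf : (0 : ℝ) < (Nat.factorial M : ℝ) := by exact_mod_cast Nat.factorial_pos M
  have hrw : ∏ k ∈ Finset.range M, (1 - t / ((k : ℝ) + 1))
      = (∏ k ∈ Finset.range M, ((k : ℝ) + 1 - t)) / (Nat.factorial M : ℝ) := by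
    rw [← aux_prod_add_one M, ← Finset.prod_div_distrib]
    refine Finset.prod_congr rfl fun k _ => ?_
    have hk0 : ((k : ℝ) + 1) ≠ 0 := by positivity
    field_simp
  rw [hrw, abs_div, abs_of_pos hMf, div_le_div_iff_of_pos_right hMf]
  rw [Finset.abs_prod]
  have hsplit : M = i + (M - i) := by omega
  conv_lhs => rw [hsplit]
  rw [Finset.prod_range_add]
  have p1 : ∏ k ∈ Finset.range i, |(k : ℝ) + 1 - t| ≤ (Nat.factorial i : ℝ) := by
    rw [← aux_prod_sub_real i]
    refine Finset.prod_le_prod (fun _ _ => abs_nonneg _) fun k hk => ?_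
    have hki : (k : ℝ) + 1 ≤ (i : ℝ) := by exact_mod_cast Finset.mem_range.mp hk
    rw [abs_le]
    constructor <;> linarith
  have p2 : ∏ k ∈ Finset.range (M - i), |((i + k : ℕ) : ℝ) + 1 - t| ≤
      (Nat.factorial (M - i) : ℝ) := by
    rw [← aux_prod_add_one (M - i)]
    refine Finset.prod_le_prod (fun _ _ => abs_nonneg _) fun k _ => ?_
    push_cast
    rw [abs_le]
    constructor <;> [skip; skip] <;> push_cast <;>
      (try constructor) <;> nlinarith [ht1, ht2, (Nat.cast_nonneg k : (0:ℝ) ≤ k)]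
  calc (∏ k ∈ Finset.range i, |(k : ℝ) + 1 - t|) *
        ∏ k ∈ Finset.range (M - i), |((i + k : ℕ) : ℝ) + 1 - t|
      ≤ (Nat.factorial i : ℝ) * (Nat.factorial (M - i) : ℝ) := by
        apply mul_le_mul p1 p2 (Finset.prod_nonneg fun _ _ => abs_nonneg _) (by positivity)

/-- `i!(M-i)!/M! ≤ 1/M` for `1 ≤ i < M`. -/
lemma fact_bound (M i : ℕ) (h1 : 1 ≤ i) (h2 : i < M) :
    ((Nat.factorial i : ℝ) * (Nat.factorial (M - i) : ℝ)) / (Nat.factorial M : ℝ)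
      ≤ 1 / (M : ℝ) := by
  have hch : (M : ℝ) ≤ (M.choose i : ℝ) := by exact_mod_cast aux_choose M i h1 h2
  have hMf : (Nat.factorial M : ℝ)
      = (M.choose i : ℝ) * ((Nat.factorial i : ℝ) * (Nat.factorial (M - i) : ℝ)) := by
    rw [← Nat.choose_mul_factorial_mul_factorial h2.le]
    push_cast
    ring
  have hp : (0 : ℝ) < (Nat.factorial i : ℝ) * (Nat.factorial (M - i) : ℝ) := by
    exact_mod_cast Nat.mul_pos (Nat.factorial_pos i) (Nat.factorial_pos (M - i))
  have hM0 : (0 : ℝ) < (M : ℝ) := by exact_mod_cast (by omega : 0 < M)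
  rw [hMf, div_le_div_iff₀ (by nlinarith) hM0]
  nlinarith

/-- Strict bound on `(0, M+1)`. -/
lemma key_lt (M : ℕ) (hM : 1 ≤ M) (t : ℝ) (ht0 : 0 < t) (htM : t < (M : ℝ) + 1) :
    |∏ k ∈ Finset.range M, (1 - t / ((k : ℝ) + 1))| < 1 := by
  have hne : (Finset.range M).Nonempty := Finset.nonempty_range_iff.mpr (by omega)
  rcases lt_or_ge t 1 with h1 | h1
  · have hpos : ∀ k ∈ Finset.range M, 0 < 1 - t / ((k : ℝ) + 1) := by
      intro k _
      have hk0 : (0 : ℝ) ≤ (k : ℝ) := Nat.cast_nonneg k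
      have hk1 : (1 : ℝ) ≤ (k : ℝ) + 1 := by linarith
      have : t / ((k : ℝ) + 1) < 1 := (div_lt_one (by positivity)).mpr (by linarith)
      linarith
    have hlt : ∀ k ∈ Finset.range M, 1 - t / ((k : ℝ) + 1) < 1 := by
      intro k _
      have : 0 < t / ((k : ℝ) + 1) := by positivity
      linarith
    have h := Finset.prod_lt_prod_of_nonempty hpos hlt hne
    rw [Finset.prod_const_one] at h
    rw [abs_of_pos (Finset.prod_pos hpos)]
    exact h
  · rcases lt_or_ge t (M : ℝ) with h2 | h2
    · -- 1 ≤ t < M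
      set i := Nat.floor t with hidef
      have hi1 : 1 ≤ i := Nat.le_floor (by exact_mod_cast h1)
      have hile : (i : ℝ) ≤ t := Nat.floor_le ht0.le
      have hiM : i < M := by exact_mod_cast lt_of_le_of_lt hile h2
      have hb := habs M i hiM.le t hile (Nat.lt_floor_add_one t).le
      refine lt_of_le_of_lt hb (lt_of_le_of_lt (fact_bound M i hi1 hiM) ?_)
      have hM2 : (2 : ℝ) ≤ (M : ℝ) := by exact_mod_cast (by omega : 2 ≤ M)
      rw [div_lt_one (by linarith)]
      linarith
    · rcases eq_or_lt_of_le h2 with he | hlt2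
      · -- t = M : zero factor
        rw [Finset.prod_eq_zero (Finset.mem_range.mpr (by omega : M - 1 < M))
          (show 1 - t / (((M - 1 : ℕ) : ℝ) + 1) = 0 by
            have hc : ((M - 1 : ℕ) : ℝ) + 1 = (M : ℝ) := by
              rw [Nat.cast_sub hM]; ring
            have hMpos : (0 : ℝ) < (M : ℝ) := by exact_mod_cast hM
            rw [hc, ← he, div_self hMpos.ne', sub_self]), abs_zero]
        exact one_pos
      · -- M < t < M+1
        rw [Finset.abs_prod]
        have h0 : ∀ k ∈ Finset.range M, (0 : ℝ) < |1 - t / ((k : ℝ) + 1)| := by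
          intro k hk
          have hk1 : (k : ℝ) + 1 ≤ (M : ℝ) := by exact_mod_cast Finset.mem_range.mp hk
          have hgt : 1 < t / ((k : ℝ) + 1) :=
            (one_lt_div (by positivity)).mpr (lt_of_le_of_lt hk1 hlt2)
          rw [abs_pos]
          exact ne_of_lt (by linarith)
        have hlt3 : ∀ k ∈ Finset.range M,
            |1 - t / ((k : ℝ) + 1)| < ((M : ℝ) - k) / ((k : ℝ) + 1) := by
          intro k hk
          have hk1 : (k : ℝ) + 1 ≤ (M : ℝ) := by exact_mod_cast Finset.mem_range.mp hk
          have hkpos : (0 : ℝ) < (k : ℝ) + 1 := by positivity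
          have hgt : 1 < t / ((k : ℝ) + 1) :=
            (one_lt_div hkpos).mpr (lt_of_le_of_lt hk1 hlt2)
          have heq2 : -(1 - t / ((k : ℝ) + 1)) = (t - ((k : ℝ) + 1)) / ((k : ℝ) + 1) := by
            field_simp
            ring
          rw [abs_of_neg (by linarith : 1 - t / ((k : ℝ) + 1) < 0), heq2,
            div_lt_div_iff₀ hkpos hkpos]
          nlinarith
        have h := Finset.prod_lt_prod_of_nonempty h0 hlt3 hne
        refine lt_of_lt_of_le h (le_of_eq ?_)
        rw [Finset.prod_div_distrib, aux_prod_sub_real M, aux_prod_add_one M,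
          div_self (by exact_mod_cast (Nat.factorial_pos M).ne' : (Nat.factorial M : ℝ) ≠ 0)]

/-- Part (b): `|∏| ≤ 1/M` on `[1, M]`. -/
lemma key_b (M : ℕ) (hM : 1 ≤ M) (t : ℝ) (h1 : 1 ≤ t) (h2 : t ≤ (M : ℝ)) :
    |∏ k ∈ Finset.range M, (1 - t / ((k : ℝ) + 1))| ≤ 1 / (M : ℝ) := by
  by_cases hM1 : M = 1
  · subst hM1
    have ht : t = 1 := le_antisymm (by exact_mod_cast h2) h1
    subst ht
    norm_num
  · have hM2 : 2 ≤ M := by omega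
    set i := min (Nat.floor t) (M - 1) with hidef
    have hfl : 1 ≤ Nat.floor t := Nat.le_floor (by exact_mod_cast h1)
    have hi1 : 1 ≤ i := le_min hfl (by omega)
    have hiM : i < M := by
      have := min_le_right (Nat.floor t) (M - 1)
      omega
    have ht0 : (0 : ℝ) ≤ t := by linarith
    have ht1 : (i : ℝ) ≤ t := by
      refine le_trans ?_ (Nat.floor_le ht0)
      exact_mod_cast min_le_left _ _
    have ht2 : t ≤ (i : ℝ) + 1 := by
      rcases le_or_gt (Nat.floor t) (M - 1) with h | h
      · rw [hidef, min_eq_left h]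
        exact (Nat.lt_floor_add_one t).le
      · rw [hidef, min_eq_right h.le, Nat.cast_sub hM]
        push_cast
        linarith
    exact le_trans (habs M i hiM.le t ht1 ht2) (fact_bound M i hi1 hiM)

lemma conv_prod (M : ℕ) (b x : ℝ) :
    ∏ k ∈ Finset.range M, (1 - ((M : ℝ) + 1) * x / (b * ((k : ℝ) + 1)))
      = ∏ k ∈ Finset.range M, (1 - (((M : ℝ) + 1) * x / b) / ((k : ℝ) + 1)) :=
  Finset.prod_congr rfl fun k _ => by rw [div_div]

theorem stmt_11 (b : ℝ) (hb : 0 < b) (M : ℕ) (hM : 1 ≤ M)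
    (N : ℕ) (hN : 2 ≤ N)
    (L : Matrix (Fin N) (Fin N) ℝ) (hsymm : L.IsSymm) (hpsd : L.PosSemidef)
    (lam : Fin N → ℝ) (v : Fin N → Fin N → ℝ)
    (hlam0 : ∀ i : Fin N, (i : ℕ) = 0 → lam i = 0)
    (hlam_pos : ∀ i : Fin N, (i : ℕ) ≠ 0 → 0 < lam i)
    (heig : ∀ i, L.mulVec (v i) = lam i • v i)
    (horth : ∀ i j, v i ⬝ᵥ v j = if i = j then 1 else 0)
    (hv0 : ∀ i : Fin N, (i : ℕ) = 0 → v i = fun _ => (Real.sqrt N)⁻¹)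
    (hne : (Finset.univ.filter (fun i : Fin N => (i : ℕ) ≠ 0)).Nonempty)
    -- all nonzero eigenvalues lie in (0, b), where b = β̄
    (hspec : ∀ i : Fin N, (i : ℕ) ≠ 0 → lam i ∈ Set.Ioo 0 b)
    -- the M-periodic gain sequence ε(k + jM) = (M+1)/(b(k+1))
    (ε : ℕ → ℝ)
    (hε : ∀ j k, k < M → ε (k + j * M) = (M + 1) / (b * (k + 1))) :
    -- (a) pointwise bound on the subintervals, and |h| < 1 on (0, b)
    (∀ i ≤ M, ∀ x ∈ Set.Icc (b * i / (M + 1)) (b * (i + 1) / (M + 1)), x ≠ 0 → x ≠ b →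
      |∏ k ∈ Finset.range M, (1 - (M + 1) * x / (b * (k + 1)))| ≤
        ((Nat.factorial i : ℝ) * (Nat.factorial (M - i) : ℝ)) / (Nat.factorial M : ℝ)) ∧
    (∀ x ∈ Set.Ioo 0 b,
      |∏ k ∈ Finset.range M, (1 - (M + 1) * x / (b * (k + 1)))| < 1) ∧
    -- (b) uniform bound 1/M on the middle interval
    (∀ x ∈ Set.Icc (b / (M + 1)) (M * b / (M + 1)),
      |∏ k ∈ Finset.range M, (1 - (M + 1) * x / (b * (k + 1)))| ≤ 1 / M) ∧
    -- asymptotic average consensus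
    Tendsto (consProd L ε) atTop
      (nhds ((N : ℝ)⁻¹ • vecMulVec (fun _ => 1) (fun _ => 1))) ∧
    -- rate bound when the nonzero spectrum lies in [b/(M+1), Mb/(M+1)]
    ((∀ i : Fin N, (i : ℕ) ≠ 0 → lam i ∈ Set.Icc (b / (M + 1)) (M * b / (M + 1))) →
      (Finset.univ.filter (fun i : Fin N => (i : ℕ) ≠ 0)).sup' hne
          (fun i => |∏ k ∈ Finset.range M, (1 - ε k * lam i)|) ≤ 1 / M) := by
  have hM1R : (0 : ℝ) < (M : ℝ) + 1 := by positivity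
  -- part (a) pointwise
  have ga : ∀ i ≤ M, ∀ x ∈ Set.Icc (b * i / (M + 1)) (b * (i + 1) / (M + 1)),
      |∏ k ∈ Finset.range M, (1 - (M + 1) * x / (b * (k + 1)))| ≤
        ((Nat.factorial i : ℝ) * (Nat.factorial (M - i) : ℝ)) / (Nat.factorial M : ℝ) := by
    intro i hiM x hx
    rw [conv_prod M b x]
    apply habs M i hiM
    · rw [le_div_iff₀ hb]
      have := (div_le_iff₀ hM1R).mp hx.1
      linarith
    · rw [div_le_iff₀ hb]
      have := (le_div_iff₀ hM1R).mp hx.2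
      linarith
  -- part (a) strict
  have ga2 : ∀ x ∈ Set.Ioo 0 b,
      |∏ k ∈ Finset.range M, (1 - (M + 1) * x / (b * (k + 1)))| < 1 := by
    intro x hx
    rw [conv_prod M b x]
    apply key_lt M hM
    · exact div_pos (mul_pos hM1R hx.1) hb
    · rw [div_lt_iff₀ hb]
      nlinarith [hx.2]
  -- part (b)
  have gb3 : ∀ x ∈ Set.Icc (b / (M + 1)) ((M : ℝ) * b / (M + 1)),
      |∏ k ∈ Finset.range M, (1 - (M + 1) * x / (b * (k + 1)))| ≤ 1 / M := by
    intro x hx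
    rw [conv_prod M b x]
    apply key_b M hM
    · rw [le_div_iff₀ hb, one_mul]
      have := (div_le_iff₀ hM1R).mp hx.1
      linarith
    · rw [div_le_iff₀ hb]
      have := (le_div_iff₀ hM1R).mp hx.2
      linarith
  -- spectral decomposition machinery
  have hWsum : ∑ i, vecMulVec (v i) (v i) = (1 : Matrix (Fin N) (Fin N) ℝ) := by
    have hVVt : (Matrix.of v) * (Matrix.of v)ᵀ = 1 := by
      ext i j
      simpa [Matrix.mul_apply, Matrix.one_apply, dotProduct] using horth i j
    have hVtV := mul_eq_one_comm.mp hVVt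
    ext j k
    have h2 := congrFun (congrFun hVtV j) k
    simpa [Matrix.mul_apply, Matrix.sum_apply, Matrix.vecMulVec_apply] using h2
  have hLW : ∀ i, L * vecMulVec (v i) (v i) = lam i • vecMulVec (v i) (v i) := by
    intro i
    ext j k
    have h2 := congrFun (heig i) j
    simp only [Matrix.mulVec, dotProduct, Pi.smul_apply, smul_eq_mul] at h2
    simp only [Matrix.mul_apply, Matrix.vecMulVec_apply, Matrix.smul_apply, smul_eq_mul]
    calc ∑ m, L j m * (v i m * v i k) = (∑ m, L j m * v i m) * v i k := by
          rw [Finset.sum_mul]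
          exact Finset.sum_congr rfl fun m _ => by ring
      _ = lam i * (v i j * v i k) := by rw [h2]; ring
  have hdecomp : ∀ T, consProd L ε T
      = ∑ i, (∏ k ∈ Finset.range T, (1 - ε k * lam i)) • vecMulVec (v i) (v i) := by
    intro T
    induction T with
    | zero => simp [consProd, hWsum]
    | succ T ih =>
      show (1 - ε T • L) * consProd L ε T = _
      rw [ih, sub_mul, one_mul, Matrix.smul_mul, Matrix.mul_sum, Finset.smul_sum,
        ← Finset.sum_sub_distrib]
      refine Finset.sum_congr rfl fun i _ => ?_
      rw [Matrix.mul_smul, hLW i, Finset.prod_range_succ, smul_smul, smul_smul, ← sub_smul]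
      congr 1
      ring
  have hM0 : 0 < M := hM
  have hεk : ∀ k, k < M → ε k = ((M : ℝ) + 1) / (b * ((k : ℝ) + 1)) := by
    intro k hk
    simpa using hε 0 k hk
  have hper : ∀ q k, k < M → ε (q * M + k) = ε k := by
    intro q k hk
    rw [Nat.add_comm, hε q k hk, hεk k hk]
  -- decay of the scalar coefficients
  have htend0 : ∀ i : Fin N, (i : ℕ) ≠ 0 →
      Tendsto (fun T => ∏ k ∈ Finset.range T, (1 - ε k * lam i)) atTop (nhds 0) := by
    intro i hi
    obtain ⟨hl0, hlb⟩ := hspec i hi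
    set a : ℕ → ℝ := fun k => 1 - ε k * lam i with ha
    have hr : |∏ k ∈ Finset.range M, a k| < 1 := by
      have heq : ∏ k ∈ Finset.range M, a k
          = ∏ k ∈ Finset.range M, (1 - ((M : ℝ) + 1) * lam i / (b * ((k : ℝ) + 1))) := by
        refine Finset.prod_congr rfl fun k hk => ?_
        rw [ha]
        simp only
        rw [hεk k (Finset.mem_range.mp hk)]
        ring
      rw [heq]
      exact ga2 (lam i) ⟨hl0, hlb⟩
    set r := |∏ k ∈ Finset.range M, a k| with hrdef
    have hr0 : 0 ≤ r := abs_nonneg _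
    set B := ∏ k ∈ Finset.range M, (|a k| + 1) with hBdef
    have hB1 : ∀ s, s ≤ M → ∏ k ∈ Finset.range s, |a k| ≤ B := by
      intro s hs
      have hone : (1 : ℝ) ≤ ∏ k ∈ Finset.Ico s M, (|a k| + 1) := by
        calc (1 : ℝ) = ∏ k ∈ Finset.Ico s M, 1 := (Finset.prod_const_one).symm
          _ ≤ ∏ k ∈ Finset.Ico s M, (|a k| + 1) :=
              Finset.prod_le_prod (fun _ _ => zero_le_one)
                (fun k _ => by linarith [abs_nonneg (a k)])
      calc ∏ k ∈ Finset.range s, |a k| ≤ ∏ k ∈ Finset.range s, (|a k| + 1) :=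
            Finset.prod_le_prod (fun _ _ => abs_nonneg _)
              (fun k _ => by linarith [abs_nonneg (a k)])
        _ ≤ (∏ k ∈ Finset.range s, (|a k| + 1)) * ∏ k ∈ Finset.Ico s M, (|a k| + 1) :=
            le_mul_of_one_le_right
              (Finset.prod_nonneg fun k _ => by linarith [abs_nonneg (a k)]) hone
        _ = B := Finset.prod_range_mul_prod_Ico _ hs
    have hpow : ∀ q, ∏ k ∈ Finset.range (q * M), a k = (∏ k ∈ Finset.range M, a k) ^ q := by
      intro q
      induction q with
      | zero => simp
      | succ q ih =>
        rw [show (q + 1) * M = q * M + M from by ring, Finset.prod_range_add, ih, pow_succ]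
        congr 1
        refine Finset.prod_congr rfl fun k hk => ?_
        simp only [ha]
        rw [hper q k (Finset.mem_range.mp hk)]
    have hbound : ∀ T, |∏ k ∈ Finset.range T, a k| ≤ B * r ^ (T / M) := by
      intro T
      conv_lhs => rw [show T = T / M * M + T % M from by
        rw [Nat.mul_comm (T / M) M]; exact (Nat.div_add_mod T M).symm]
      rw [Finset.prod_range_add, abs_mul, hpow, abs_pow]
      have h2 : |∏ k ∈ Finset.range (T % M), a (T / M * M + k)| ≤ B := by
        rw [Finset.abs_prod]
        calc ∏ k ∈ Finset.range (T % M), |a (T / M * M + k)|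
            = ∏ k ∈ Finset.range (T % M), |a k| := by
              refine Finset.prod_congr rfl fun k hk => ?_
              simp only [ha]
              rw [hper (T / M) k (lt_trans (Finset.mem_range.mp hk) (Nat.mod_lt T hM0))]
          _ ≤ B := hB1 _ (Nat.mod_lt T hM0).le
      calc r ^ (T / M) * |∏ k ∈ Finset.range (T % M), a (T / M * M + k)|
          ≤ r ^ (T / M) * B := mul_le_mul_of_nonneg_left h2 (pow_nonneg hr0 _)
        _ = B * r ^ (T / M) := mul_comm _ _
    have hdiv : Tendsto (fun T : ℕ => T / M) atTop atTop :=
      tendsto_atTop_atTop.mpr fun n => ⟨n * M, fun a' ha' => (Nat.le_div_iff_mul_le hM0).mpr ha'⟩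
    have hgeo : Tendsto (fun T : ℕ => B * r ^ (T / M)) atTop (nhds 0) := by
      have h1 := (tendsto_pow_atTop_nhds_zero_of_lt_one hr0 hr).comp hdiv
      have h2 := h1.const_mul B
      simpa using h2
    exact squeeze_zero_norm (fun T => by rw [Real.norm_eq_abs]; exact hbound T) hgeo
  -- the limit
  have hlimit : Tendsto (consProd L ε) atTop
      (nhds (∑ i : Fin N, (if (i : ℕ) = 0 then (1 : ℝ) else 0) • vecMulVec (v i) (v i))) := by
    have hfn : consProd L ε
        = fun T => ∑ i, (∏ k ∈ Finset.range T, (1 - ε k * lam i)) • vecMulVec (v i) (v i) :=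
      funext hdecomp
    rw [hfn]
    refine tendsto_finset_sum _ fun i _ => ?_
    by_cases hi : (i : ℕ) = 0
    · simp only [if_pos hi]
      have hl : lam i = 0 := hlam0 i hi
      have hconst : (fun T => (∏ k ∈ Finset.range T, (1 - ε k * lam i)) • vecMulVec (v i) (v i))
          = fun _ => (1 : ℝ) • vecMulVec (v i) (v i) := by
        funext T
        rw [hl]
        simp
      rw [hconst]
      exact tendsto_const_nhds
    · simp only [if_neg hi]
      exact (htend0 i hi).smul_const _
  have hsum_eq : ∑ i : Fin N, (if (i : ℕ) = 0 then (1 : ℝ) else 0) • vecMulVec (v i) (v i)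
      = (N : ℝ)⁻¹ • vecMulVec (fun _ => (1 : ℝ)) (fun _ => 1) := by
    have hN0 : 0 < N := by omega
    rw [Finset.sum_eq_single (⟨0, hN0⟩ : Fin N)]
    · rw [if_pos rfl, one_smul, hv0 ⟨0, hN0⟩ rfl]
      ext j k
      simp only [Matrix.vecMulVec_apply, Matrix.smul_apply, smul_eq_mul, mul_one]
      rw [← mul_inv, Real.mul_self_sqrt (Nat.cast_nonneg N)]
    · intro i _ hne'
      rw [if_neg, zero_smul]
      intro h
      exact hne' (Fin.ext h)
    · intro h
      exact absurd (Finset.mem_univ _) h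
  refine ⟨fun i hiM x hx _ _ => ga i hiM x hx, ga2, gb3, ?_, ?_⟩
  · rw [← hsum_eq]
    exact hlimit
  · intro hIcc
    refine Finset.sup'_le _ _ fun i hi => ?_
    have hi' := (Finset.mem_filter.mp hi).2
    have heq : ∏ k ∈ Finset.range M, (1 - ε k * lam i)
        = ∏ k ∈ Finset.range M, (1 - ((M : ℝ) + 1) * lam i / (b * ((k : ℝ) + 1))) := by
      refine Finset.prod_congr rfl fun k hk => ?_
      rw [hεk k (Finset.mem_range.mp hk)]
      ring
    rw [heq]
    exact gb3 (lam i) (hIcc i hi')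
end
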